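/- arXiv:2103.08655 — 3 statements merged into one kernel-verified Lean document; each statement's English description precedes it below -/
import Mathlib

section
/- Given pastures P, P₁, P₂ and morphisms of pastures f₁ : P → P₁ and f₂ : P → P₂, the fibered coproduct P₁ ⊗_P P₂ is a pasture: multiplication of equivalence classes is well-defined, its nonzero elements form an abelian group, the involution -[(a,b)] = [(-a,b)] = [(a,-b)] is well-defined, and its nullset satisfies the three axioms of a nullset. -/
universe u v w

/-- A pasture structure on a type `P`: a multiplication, a zero, a one,
an involution `neg`, and a ternary nullset relation `null a b c`
(meaning "`a + b + c = 0`"). -/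
structure PastureStr (P : Type u) where
  mul : P → P → P
  zero : P
  one : P
  neg : P → P
  null : P → P → P → Prop

/-- `P` together with a `PastureStr` is a pasture: `P` is a commutative
monoid with zero whose nonzero elements form an abelian group, `neg` is an
involution fixing `0`, and the nullset is invariant under permutations,
invariant under multiplication, and satisfies `a + b + 0 = 0 ↔ a = -b`. -/
structure PastureStr.IsPasture {P : Type u} (S : PastureStr P) : Prop where
  mul_comm : ∀ a b : P, S.mul a b = S.mul b a
  mul_assoc : ∀ a b c : P, S.mul (S.mul a b) c = S.mul a (S.mul b c)
  one_mul : ∀ a : P, S.mul S.one a = a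
  zero_mul : ∀ a : P, S.mul S.zero a = S.zero
  one_ne_zero : S.one ≠ S.zero
  mul_ne_zero : ∀ a b : P, a ≠ S.zero → b ≠ S.zero → S.mul a b ≠ S.zero
  exists_inv : ∀ a : P, a ≠ S.zero → ∃ b : P, S.mul a b = S.one
  neg_neg : ∀ a : P, S.neg (S.neg a) = a
  neg_zero : S.neg S.zero = S.zero
  null_swap_left : ∀ a b c : P, S.null a b c → S.null b a c
  null_swap_right : ∀ a b c : P, S.null a b c → S.null a c b
  null_mul : ∀ d a b c : P, S.null a b c → S.null (S.mul d a) (S.mul d b) (S.mul d c)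
  null_zero : ∀ a b : P, S.null a b S.zero ↔ a = S.neg b

/-- A morphism of pastures: a multiplicative map preserving `0`, `1`,
the involution and the nullset. -/
structure PastureStr.IsHom {P : Type u} {P' : Type v} (S : PastureStr P) (T : PastureStr P')
    (f : P → P') : Prop where
  map_mul : ∀ a b : P, f (S.mul a b) = T.mul (f a) (f b)
  map_zero : f S.zero = T.zero
  map_one : f S.one = T.one
  map_neg : ∀ a : P, f (S.neg a) = T.neg (f a)
  map_null : ∀ a b c : P, S.null a b c → T.null (f a) (f b) (f c)

variable {P P₁ P₂ : Type u}

/-- The equivalence relation defining the fibered coproduct `P₁ ⊗_P P₂`: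
`(a,b) ∼ (c,d)` iff both pairs contain a zero entry, or
`(c,d) = (f₁(x)⁻¹ a, f₂(x) b)` for some `x ∈ P^×` (expressed here as
`f₁(x) · c = a` and `d = f₂(x) · b`). -/
def tensorRel (S : PastureStr P) (S₁ : PastureStr P₁) (S₂ : PastureStr P₂)
    (f₁ : P → P₁) (f₂ : P → P₂) : P₁ × P₂ → P₁ × P₂ → Prop := fun x y =>
  ((x.1 = S₁.zero ∨ x.2 = S₂.zero) ∧ (y.1 = S₁.zero ∨ y.2 = S₂.zero)) ∨
    ∃ z : P, z ≠ S.zero ∧ S₁.mul (f₁ z) y.1 = x.1 ∧ y.2 = S₂.mul (f₂ z) x.2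

/-- The underlying set of the fibered coproduct `P₁ ⊗_P P₂`: the quotient of
the Cartesian product `P₁ × P₂` by the relation `tensorRel`. -/
def TensorCarrier (S : PastureStr P) (S₁ : PastureStr P₁) (S₂ : PastureStr P₂)
    (f₁ : P → P₁) (f₂ : P → P₂) : Type u :=
  Quot (tensorRel S S₁ S₂ f₁ f₂)

/-- The nullset of the fibered coproduct `P₁ ⊗_P P₂`:
`[(a,y)] + [(b,y)] + [(c,y)] = 0` whenever `a + b + c = 0` in `P₁` and
`y ∈ P₂`, and `[(x,a)] + [(x,b)] + [(x,c)] = 0` whenever `a + b + c = 0` in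
`P₂` and `x ∈ P₁`. -/
def tensorNull (S : PastureStr P) (S₁ : PastureStr P₁) (S₂ : PastureStr P₂)
    (f₁ : P → P₁) (f₂ : P → P₂) (u v w : TensorCarrier S S₁ S₂ f₁ f₂) : Prop :=
  (∃ a b c y, S₁.null a b c ∧
      u = Quot.mk (tensorRel S S₁ S₂ f₁ f₂) (a, y) ∧
      v = Quot.mk (tensorRel S S₁ S₂ f₁ f₂) (b, y) ∧
      w = Quot.mk (tensorRel S S₁ S₂ f₁ f₂) (c, y)) ∨
  (∃ x a b c, S₂.null a b c ∧
      u = Quot.mk (tensorRel S S₁ S₂ f₁ f₂) (x, a) ∧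
      v = Quot.mk (tensorRel S S₁ S₂ f₁ f₂) (x, b) ∧
      w = Quot.mk (tensorRel S S₁ S₂ f₁ f₂) (x, c))

/-- A pasture structure `SQ` on the quotient `P₁ ⊗_P P₂` realizes the fibered
coproduct if: its zero is `[(0,0)]`, its one is `[(1,1)]`, its multiplication
is given on classes by componentwise multiplication (in particular this
multiplication of equivalence classes is well-defined), its involution is
given by `-[(a,b)] = [(-a,b)] = [(a,-b)]` (in particular this involution is
well-defined), and its nullset is exactly `tensorNull`. -/
def TensorSpec (S : PastureStr P) (S₁ : PastureStr P₁) (S₂ : PastureStr P₂)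
    (f₁ : P → P₁) (f₂ : P → P₂)
    (SQ : PastureStr (TensorCarrier S S₁ S₂ f₁ f₂)) : Prop :=
  SQ.zero = Quot.mk (tensorRel S S₁ S₂ f₁ f₂) (S₁.zero, S₂.zero) ∧
  SQ.one = Quot.mk (tensorRel S S₁ S₂ f₁ f₂) (S₁.one, S₂.one) ∧
  (∀ (a : P₁) (b : P₂) (c : P₁) (d : P₂),
      SQ.mul (Quot.mk (tensorRel S S₁ S₂ f₁ f₂) (a, b))
          (Quot.mk (tensorRel S S₁ S₂ f₁ f₂) (c, d)) =
        Quot.mk (tensorRel S S₁ S₂ f₁ f₂) (S₁.mul a c, S₂.mul b d)) ∧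
  (∀ (a : P₁) (b : P₂),
      SQ.neg (Quot.mk (tensorRel S S₁ S₂ f₁ f₂) (a, b)) =
        Quot.mk (tensorRel S S₁ S₂ f₁ f₂) (S₁.neg a, b)) ∧
  (∀ (a : P₁) (b : P₂),
      SQ.neg (Quot.mk (tensorRel S S₁ S₂ f₁ f₂) (a, b)) =
        Quot.mk (tensorRel S S₁ S₂ f₁ f₂) (a, S₂.neg b)) ∧
  (∀ u v w, SQ.null u v w ↔ tensorNull S S₁ S₂ f₁ f₂ u v w)

section Aux

variable {Q : Type u} {R : Type v}

theorem pasture_mul_zero {T : PastureStr Q} (hT : T.IsPasture) (a : Q) :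
    T.mul a T.zero = T.zero := by rw [hT.mul_comm, hT.zero_mul]

theorem pasture_cancel {T : PastureStr Q} (hT : T.IsPasture) {a b : Q}
    (ha : a ≠ T.zero) (h : T.mul a b = T.zero) : b = T.zero := by
  by_contra hb; exact hT.mul_ne_zero a b ha hb h

theorem pasture_mul_neg {T : PastureStr Q} (hT : T.IsPasture) (d b : Q) :
    T.mul d (T.neg b) = T.neg (T.mul d b) := by
  have h0 : T.null (T.neg b) b T.zero := (hT.null_zero _ _).mpr rfl
  have h := hT.null_mul d _ _ _ h0
  rw [pasture_mul_zero hT] at h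
  exact (hT.null_zero _ _).mp h

theorem pasture_neg_one_ne_zero {T : PastureStr Q} (hT : T.IsPasture) :
    T.neg T.one ≠ T.zero := by
  intro h
  apply hT.one_ne_zero
  rw [← hT.neg_neg T.one, h, hT.neg_zero]

theorem hom_ne_zero {T : PastureStr Q} {T' : PastureStr R} (hT : T.IsPasture)
    (hT' : T'.IsPasture) {f : Q → R} (hf : T.IsHom T' f) {z : Q} (hz : z ≠ T.zero) :
    f z ≠ T'.zero := by
  obtain ⟨w, hw⟩ := hT.exists_inv z hz
  intro h
  apply hT'.one_ne_zero
  rw [← hf.map_one, ← hw, hf.map_mul, h, hT'.zero_mul]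

end Aux

section Tensor

variable {P P₁ P₂ : Type u}
variable (S : PastureStr P) (S₁ : PastureStr P₁) (S₂ : PastureStr P₂)
variable (f₁ : P → P₁) (f₂ : P → P₂)

theorem tensorRel_equiv (hS : S.IsPasture) (hS₁ : S₁.IsPasture) (hS₂ : S₂.IsPasture)
    (hf₁ : S.IsHom S₁ f₁) (hf₂ : S.IsHom S₂ f₂) :
    Equivalence (tensorRel S S₁ S₂ f₁ f₂) := by
  constructor
  · intro x
    exact Or.inr ⟨S.one, hS.one_ne_zero, by rw [hf₁.map_one, hS₁.one_mul],
      by rw [hf₂.map_one, hS₂.one_mul]⟩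
  · intro x y h
    rcases h with ⟨h1, h2⟩ | ⟨z, hz, h1, h2⟩
    · exact Or.inl ⟨h2, h1⟩
    · obtain ⟨w, hw⟩ := hS.exists_inv z hz
      have hwz : w ≠ S.zero := by
        intro hw0
        rw [hw0, pasture_mul_zero hS] at hw
        exact hS.one_ne_zero hw.symm
      refine Or.inr ⟨w, hwz, ?_, ?_⟩
      · rw [← h1, ← hS₁.mul_assoc, ← hf₁.map_mul, hS.mul_comm w z, hw, hf₁.map_one,
          hS₁.one_mul]
      · rw [h2, ← hS₂.mul_assoc, ← hf₂.map_mul, hS.mul_comm w z, hw, hf₂.map_one,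
          hS₂.one_mul]
  · intro x y zz h h'
    rcases h with ⟨h1, h2⟩ | ⟨z, hz, h1, h2⟩
    · rcases h' with ⟨h1', h2'⟩ | ⟨z', hz', h1', h2'⟩
      · exact Or.inl ⟨h1, h2'⟩
      · refine Or.inl ⟨h1, ?_⟩
        rcases h2 with h | h
        · exact Or.inl (pasture_cancel hS₁ (hom_ne_zero hS hS₁ hf₁ hz') (h1'.trans h))
        · right; rw [h2', h, pasture_mul_zero hS₂]
    · rcases h' with ⟨h1', h2'⟩ | ⟨z', hz', h1', h2'⟩
      · refine Or.inl ⟨?_, h2'⟩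
        rcases h1' with h | h
        · left; rw [← h1, h, pasture_mul_zero hS₁]
        · exact Or.inr (pasture_cancel hS₂ (hom_ne_zero hS hS₂ hf₂ hz) (h2.symm.trans h))
      · refine Or.inr ⟨S.mul z z', hS.mul_ne_zero _ _ hz hz', ?_, ?_⟩
        · rw [hf₁.map_mul, hS₁.mul_assoc, h1', h1]
        · rw [h2', h2, ← hS₂.mul_assoc, ← hf₂.map_mul, hS.mul_comm z' z]

theorem tensor_mk_eq (hS : S.IsPasture) (hS₁ : S₁.IsPasture) (hS₂ : S₂.IsPasture)
    (hf₁ : S.IsHom S₁ f₁) (hf₂ : S.IsHom S₂ f₂) {x y : P₁ × P₂} :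
    Quot.mk (tensorRel S S₁ S₂ f₁ f₂) x = Quot.mk (tensorRel S S₁ S₂ f₁ f₂) y ↔
      tensorRel S S₁ S₂ f₁ f₂ x y := by
  rw [Quot.eq]
  exact (tensorRel_equiv S S₁ S₂ f₁ f₂ hS hS₁ hS₂ hf₁ hf₂).eqvGen_iff

theorem tensor_mul_right (hS₁ : S₁.IsPasture) (hS₂ : S₂.IsPasture)
    (x y₁ y₂ : P₁ × P₂) (h : tensorRel S S₁ S₂ f₁ f₂ y₁ y₂) :
    Quot.mk (tensorRel S S₁ S₂ f₁ f₂) (S₁.mul x.1 y₁.1, S₂.mul x.2 y₁.2) =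
      Quot.mk (tensorRel S S₁ S₂ f₁ f₂) (S₁.mul x.1 y₂.1, S₂.mul x.2 y₂.2) := by
  rcases h with ⟨h1, h2⟩ | ⟨z, hz, h1, h2⟩
  · apply Quot.sound
    refine Or.inl ⟨?_, ?_⟩
    · rcases h1 with h | h
      · left; rw [h, pasture_mul_zero hS₁]
      · right; rw [h, pasture_mul_zero hS₂]
    · rcases h2 with h | h
      · left; rw [h, pasture_mul_zero hS₁]
      · right; rw [h, pasture_mul_zero hS₂]
  · apply Quot.sound
    refine Or.inr ⟨z, hz, ?_, ?_⟩
    · rw [← h1, ← hS₁.mul_assoc, ← hS₁.mul_assoc, hS₁.mul_comm (f₁ z) x.1]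
    · rw [h2, ← hS₂.mul_assoc, ← hS₂.mul_assoc, hS₂.mul_comm x.2 (f₂ z)]

theorem tensor_mul_left (hS₁ : S₁.IsPasture) (hS₂ : S₂.IsPasture)
    (x₁ x₂ y : P₁ × P₂) (h : tensorRel S S₁ S₂ f₁ f₂ x₁ x₂) :
    Quot.mk (tensorRel S S₁ S₂ f₁ f₂) (S₁.mul x₁.1 y.1, S₂.mul x₁.2 y.2) =
      Quot.mk (tensorRel S S₁ S₂ f₁ f₂) (S₁.mul x₂.1 y.1, S₂.mul x₂.2 y.2) := by
  rw [hS₁.mul_comm x₁.1 y.1, hS₁.mul_comm x₂.1 y.1, hS₂.mul_comm x₁.2 y.2,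
    hS₂.mul_comm x₂.2 y.2]
  exact tensor_mul_right S S₁ S₂ f₁ f₂ hS₁ hS₂ y x₁ x₂ h

theorem tensor_neg_resp (hS₁ : S₁.IsPasture) (x y : P₁ × P₂)
    (h : tensorRel S S₁ S₂ f₁ f₂ x y) :
    Quot.mk (tensorRel S S₁ S₂ f₁ f₂) (S₁.neg x.1, x.2) =
      Quot.mk (tensorRel S S₁ S₂ f₁ f₂) (S₁.neg y.1, y.2) := by
  rcases h with ⟨h1, h2⟩ | ⟨z, hz, h1, h2⟩
  · apply Quot.sound
    refine Or.inl ⟨?_, ?_⟩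
    · rcases h1 with h | h
      · left; rw [h, hS₁.neg_zero]
      · exact Or.inr h
    · rcases h2 with h | h
      · left; rw [h, hS₁.neg_zero]
      · exact Or.inr h
  · apply Quot.sound
    exact Or.inr ⟨z, hz, by rw [pasture_mul_neg hS₁, h1], h2⟩

/-- The pasture structure on the fibered coproduct. -/
def tensorStr (hS₁ : S₁.IsPasture) (hS₂ : S₂.IsPasture) :
    PastureStr (TensorCarrier S S₁ S₂ f₁ f₂) where
  mul := Quot.lift₂
    (fun x y => Quot.mk (tensorRel S S₁ S₂ f₁ f₂) (S₁.mul x.1 y.1, S₂.mul x.2 y.2))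
    (tensor_mul_right S S₁ S₂ f₁ f₂ hS₁ hS₂)
    (tensor_mul_left S S₁ S₂ f₁ f₂ hS₁ hS₂)
  zero := Quot.mk (tensorRel S S₁ S₂ f₁ f₂) (S₁.zero, S₂.zero)
  one := Quot.mk (tensorRel S S₁ S₂ f₁ f₂) (S₁.one, S₂.one)
  neg := Quot.lift (fun x => Quot.mk (tensorRel S S₁ S₂ f₁ f₂) (S₁.neg x.1, x.2))
    (tensor_neg_resp S S₁ S₂ f₁ f₂ hS₁)
  null := tensorNull S S₁ S₂ f₁ f₂

end Tensor

/-- **The fibered coproduct of pastures is a pasture**: there is a pasture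
structure on the quotient `P₁ ⊗_P P₂` with the prescribed zero, one,
(well-defined) multiplication and involution of classes, and nullset. -/
theorem fibered_coproduct_is_pasture
    (S : PastureStr P) (S₁ : PastureStr P₁) (S₂ : PastureStr P₂)
    (hS : S.IsPasture) (hS₁ : S₁.IsPasture) (hS₂ : S₂.IsPasture)
    (f₁ : P → P₁) (f₂ : P → P₂) (hf₁ : S.IsHom S₁ f₁) (hf₂ : S.IsHom S₂ f₂) :
    ∃ SQ : PastureStr (TensorCarrier S S₁ S₂ f₁ f₂),
      TensorSpec S S₁ S₂ f₁ f₂ SQ ∧ SQ.IsPasture := by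
  set SQ := tensorStr S S₁ S₂ f₁ f₂ hS₁ hS₂ with hSQ
  set mk := Quot.mk (tensorRel S S₁ S₂ f₁ f₂) with hmk
  have hzero : SQ.zero = mk (S₁.zero, S₂.zero) := rfl
  have hone : SQ.one = mk (S₁.one, S₂.one) := rfl
  have tm : ∀ (a : P₁) (b : P₂) (c : P₁) (d : P₂),
      SQ.mul (mk (a, b)) (mk (c, d)) = mk (S₁.mul a c, S₂.mul b d) := fun _ _ _ _ => rfl
  have tneg : ∀ (a : P₁) (b : P₂), SQ.neg (mk (a, b)) = mk (S₁.neg a, b) := fun _ _ => rfl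
  have hnull : ∀ u v w, SQ.null u v w ↔ tensorNull S S₁ S₂ f₁ f₂ u v w :=
    fun _ _ _ => Iff.rfl
  have hz0 : ∀ (a : P₁) (b : P₂),
      mk (a, b) = mk (S₁.zero, S₂.zero) ↔ (a = S₁.zero ∨ b = S₂.zero) := by
    intro a b
    rw [hmk, tensor_mk_eq S S₁ S₂ f₁ f₂ hS hS₁ hS₂ hf₁ hf₂]
    constructor
    · rintro (⟨h, -⟩ | ⟨z, hz, h1, h2⟩)
      · exact h
      · dsimp only at h1
        left; rw [← h1, pasture_mul_zero hS₁]
    · intro h; exact Or.inl ⟨h, Or.inl rfl⟩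
  have tneg₂ : ∀ (a : P₁) (b : P₂), SQ.neg (mk (a, b)) = mk (a, S₂.neg b) := by
    intro a b
    rw [tneg]
    apply Quot.sound
    refine Or.inr ⟨S.neg S.one, pasture_neg_one_ne_zero hS, ?_, ?_⟩
    · rw [hf₁.map_neg, hf₁.map_one, hS₁.mul_comm, pasture_mul_neg hS₁,
        hS₁.mul_comm a S₁.one, hS₁.one_mul]
    · rw [hf₂.map_neg, hf₂.map_one, hS₂.mul_comm, pasture_mul_neg hS₂,
        hS₂.mul_comm b S₂.one, hS₂.one_mul]
  refine ⟨SQ, ⟨hzero, hone, tm, tneg, tneg₂, hnull⟩, ?_⟩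
  constructor
  -- mul_comm
  · intro u v
    induction u using Quot.ind with | _ x => ?_
    induction v using Quot.ind with | _ y => ?_
    obtain ⟨a, b⟩ := x; obtain ⟨c, d⟩ := y
    rw [tm, tm, hS₁.mul_comm a c, hS₂.mul_comm b d]
  -- mul_assoc
  · intro u v w
    induction u using Quot.ind with | _ x => ?_
    induction v using Quot.ind with | _ y => ?_
    induction w using Quot.ind with | _ z => ?_
    obtain ⟨a, b⟩ := x; obtain ⟨c, d⟩ := y; obtain ⟨e, g⟩ := z
    rw [tm, tm, tm, tm, hS₁.mul_assoc, hS₂.mul_assoc]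
  -- one_mul
  · intro u
    induction u using Quot.ind with | _ x => ?_
    obtain ⟨a, b⟩ := x
    rw [hone, tm, hS₁.one_mul, hS₂.one_mul]
  -- zero_mul
  · intro u
    induction u using Quot.ind with | _ x => ?_
    obtain ⟨a, b⟩ := x
    rw [hzero, tm, hS₁.zero_mul, hS₂.zero_mul]
  -- one_ne_zero
  · intro h
    rw [hone, hzero] at h
    replace h := (hz0 _ _).mp h
    rcases h with h | h
    · exact hS₁.one_ne_zero h
    · exact hS₂.one_ne_zero h
  -- mul_ne_zero
  · intro u v
    induction u using Quot.ind with | _ x => ?_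
    induction v using Quot.ind with | _ y => ?_
    obtain ⟨a, b⟩ := x; obtain ⟨c, d⟩ := y
    intro hu hv h
    rw [tm, hzero] at h
    replace h := (hz0 _ _).mp h
    have ha : a ≠ S₁.zero ∧ b ≠ S₂.zero := by
      constructor <;> intro h0 <;> apply hu <;> rw [hzero] <;> apply (hz0 _ _).mpr
      · exact Or.inl h0
      · exact Or.inr h0
    have hc : c ≠ S₁.zero ∧ d ≠ S₂.zero := by
      constructor <;> intro h0 <;> apply hv <;> rw [hzero] <;> apply (hz0 _ _).mpr
      · exact Or.inl h0
      · exact Or.inr h0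
    rcases h with h | h
    · exact hS₁.mul_ne_zero a c ha.1 hc.1 h
    · exact hS₂.mul_ne_zero b d ha.2 hc.2 h
  -- exists_inv
  · intro u
    induction u using Quot.ind with | _ x => ?_
    obtain ⟨a, b⟩ := x
    intro hu
    have ha : a ≠ S₁.zero := fun h0 => hu (by rw [hzero]; exact (hz0 _ _).mpr (Or.inl h0))
    have hb : b ≠ S₂.zero := fun h0 => hu (by rw [hzero]; exact (hz0 _ _).mpr (Or.inr h0))
    obtain ⟨a', ha'⟩ := hS₁.exists_inv a ha
    obtain ⟨b', hb'⟩ := hS₂.exists_inv b hb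
    exact ⟨mk (a', b'), by rw [tm, ha', hb', hone]⟩
  -- neg_neg
  · intro u
    induction u using Quot.ind with | _ x => ?_
    obtain ⟨a, b⟩ := x
    rw [tneg, tneg, hS₁.neg_neg]
  -- neg_zero
  · rw [hzero, tneg, hS₁.neg_zero]
  -- null_swap_left
  · intro u v w h
    replace h := (hnull u v w).mp h
    apply (hnull v u w).mpr
    rcases h with ⟨a, b, c, y, hn, hu, hv, hw⟩ | ⟨x, a, b, c, hn, hu, hv, hw⟩
    · exact Or.inl ⟨b, a, c, y, hS₁.null_swap_left a b c hn, hv, hu, hw⟩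
    · exact Or.inr ⟨x, b, a, c, hS₂.null_swap_left a b c hn, hv, hu, hw⟩
  -- null_swap_right
  · intro u v w h
    replace h := (hnull u v w).mp h
    apply (hnull u w v).mpr
    rcases h with ⟨a, b, c, y, hn, hu, hv, hw⟩ | ⟨x, a, b, c, hn, hu, hv, hw⟩
    · exact Or.inl ⟨a, c, b, y, hS₁.null_swap_right a b c hn, hu, hw, hv⟩
    · exact Or.inr ⟨x, a, c, b, hS₂.null_swap_right a b c hn, hu, hw, hv⟩
  -- null_mul
  · intro d u v w h
    induction d using Quot.ind with | _ x => ?_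
    obtain ⟨p, q⟩ := x
    replace h := (hnull u v w).mp h
    apply (hnull _ _ _).mpr
    rcases h with ⟨a, b, c, y, hn, hu, hv, hw⟩ | ⟨x, a, b, c, hn, hu, hv, hw⟩
    · subst hu; subst hv; subst hw
      exact Or.inl ⟨S₁.mul p a, S₁.mul p b, S₁.mul p c, S₂.mul q y,
        hS₁.null_mul p a b c hn, tm p q a y, tm p q b y, tm p q c y⟩
    · subst hu; subst hv; subst hw
      exact Or.inr ⟨S₁.mul p x, S₂.mul q a, S₂.mul q b, S₂.mul q c,
        hS₂.null_mul q a b c hn, tm p q x a, tm p q x b, tm p q x c⟩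
  -- null_zero
  · intro u v
    induction u using Quot.ind with | _ x => ?_
    induction v using Quot.ind with | _ y => ?_
    obtain ⟨a1, a2⟩ := x; obtain ⟨b1, b2⟩ := y
    constructor
    · intro h
      replace h := (hnull _ _ _).mp h
      rcases h with ⟨a, b, c, y, hn, hu, hv, hw⟩ | ⟨x, a, b, c, hn, hu, hv, hw⟩
      · have hcy : c = S₁.zero ∨ y = S₂.zero := (hz0 c y).mp (hw.symm.trans hzero)
        rcases hcy with h0 | h0
        · subst h0
          have hab : a = S₁.neg b := (hS₁.null_zero a b).mp hn
          rw [hu, hv, tneg, hab]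
        · subst h0
          rw [hu, hv, tneg]
          exact ((hz0 _ _).mpr (Or.inr rfl)).trans ((hz0 _ _).mpr (Or.inr rfl)).symm
      · have hcy : x = S₁.zero ∨ c = S₂.zero := (hz0 x c).mp (hw.symm.trans hzero)
        rcases hcy with h0 | h0
        · subst h0
          rw [hu, hv, tneg₂]
          exact ((hz0 _ _).mpr (Or.inl rfl)).trans ((hz0 _ _).mpr (Or.inl rfl)).symm
        · subst h0
          have hab : a = S₂.neg b := (hS₂.null_zero a b).mp hn
          rw [hu, hv, tneg₂, hab]
    · intro h
      apply (hnull _ _ _).mpr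
      refine Or.inl ⟨S₁.neg b1, b1, S₁.zero, b2, (hS₁.null_zero _ _).mpr rfl,
        h.trans (tneg b1 b2), rfl, ?_⟩
      exact hzero.trans ((hz0 S₁.zero b2).mpr (Or.inl rfl)).symm
end

section
/- Given pastures P₁, P₂ and morphisms of pastures f, g : P₁ → P₂, the coequalizer Q = {0} ∪ (P₂^×/∼), where x ∼ y iff xy⁻¹ = f(z)g(z)⁻¹ for some z ∈ P₁^×, is a pasture: multiplication of classes is well-defined and makes Q^× an abelian group, the involution -[x] = [-x] is well-defined, and the nullset ([a],[b],[c]) with a'+b'+c'=0 in P₂ for some representatives a' ∈ [a], b' ∈ [b], c' ∈ [c] satisfies the three axioms of a nullset; moreover the quotient map q : P₂ → Q, q(x) = [x], q(0) = 0, is a morphism of pastures. -/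
universe u v w

variable {P₁ P₂ : Type u}

/-- The relation on `P₂^×` defining the coequalizer of `f, g : P₁ → P₂`:
`x ∼ y` iff `x y⁻¹ = f(z) g(z)⁻¹` for some `z ∈ P₁^×` (expressed here as
`x · g(z) = f(z) · y`). -/
def coeqRel (S₁ : PastureStr P₁) (S₂ : PastureStr P₂) (f g : P₁ → P₂) :
    {x : P₂ // x ≠ S₂.zero} → {x : P₂ // x ≠ S₂.zero} → Prop := fun x y =>
  ∃ z : P₁, z ≠ S₁.zero ∧ S₂.mul x.1 (g z) = S₂.mul (f z) y.1

/-- The underlying set of the coequalizer of `f, g : P₁ → P₂`: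
`{0} ∪ (P₂^× / ∼)`, with `none` playing the role of `0`. -/
def CoeqCarrier (S₁ : PastureStr P₁) (S₂ : PastureStr P₂) (f g : P₁ → P₂) :
    Type u :=
  Option (Quot (coeqRel S₁ S₂ f g))

open Classical in
/-- The quotient map `q : P₂ → Q = {0} ∪ (P₂^× / ∼)`, sending `0` to `0` and
a nonzero `x` to its class `[x]`. -/
noncomputable def coeqMap (S₁ : PastureStr P₁) (S₂ : PastureStr P₂)
    (f g : P₁ → P₂) : P₂ → CoeqCarrier S₁ S₂ f g := fun x =>
  if h : x = S₂.zero then none else some (Quot.mk (coeqRel S₁ S₂ f g) ⟨x, h⟩)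

/-- A pasture structure `SQ` on `Q = {0} ∪ (P₂^× / ∼)` realizes the
coequalizer if: its zero is `0`, its one is `[1]`, its multiplication
satisfies `[x] · [y] = [xy]` (in particular multiplication of classes is
well-defined), its involution satisfies `-[x] = [-x]` (in particular it is
well-defined), and its nullset consists of the triples `([a],[b],[c])` such
that some representatives satisfy `a' + b' + c' = 0` in `P₂`. -/
def CoeqSpec (S₁ : PastureStr P₁) (S₂ : PastureStr P₂) (f g : P₁ → P₂)
    (SQ : PastureStr (CoeqCarrier S₁ S₂ f g)) : Prop :=
  SQ.zero = none ∧
  SQ.one = coeqMap S₁ S₂ f g S₂.one ∧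
  (∀ x y : P₂, SQ.mul (coeqMap S₁ S₂ f g x) (coeqMap S₁ S₂ f g y) =
      coeqMap S₁ S₂ f g (S₂.mul x y)) ∧
  (∀ x : P₂, SQ.neg (coeqMap S₁ S₂ f g x) = coeqMap S₁ S₂ f g (S₂.neg x)) ∧
  (∀ u v w : CoeqCarrier S₁ S₂ f g, SQ.null u v w ↔
      ∃ a b c : P₂, S₂.null a b c ∧
        coeqMap S₁ S₂ f g a = u ∧ coeqMap S₁ S₂ f g b = v ∧
        coeqMap S₁ S₂ f g c = w)

section Aux

variable (S₁ : PastureStr P₁) (S₂ : PastureStr P₂) (f g : P₁ → P₂)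

lemma mul_zero' (hS₂ : S₂.IsPasture) (a : P₂) : S₂.mul a S₂.zero = S₂.zero := by
  rw [hS₂.mul_comm, hS₂.zero_mul]

lemma mul_neg' (hS₂ : S₂.IsPasture) (d a : P₂) :
    S₂.mul d (S₂.neg a) = S₂.neg (S₂.mul d a) := by
  have h0 : S₂.null a (S₂.neg a) S₂.zero := (hS₂.null_zero _ _).2 (hS₂.neg_neg a).symm
  have h1 := hS₂.null_mul d _ _ _ h0
  rw [mul_zero' S₂ hS₂] at h1
  exact (hS₂.null_zero _ _).1 (hS₂.null_swap_left _ _ _ h1)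

/-- Multiplication on the quotient `P₂^×/∼`. -/
def qmul (hS₂ : S₂.IsPasture) :
    Quot (coeqRel S₁ S₂ f g) → Quot (coeqRel S₁ S₂ f g) → Quot (coeqRel S₁ S₂ f g) :=
  Quot.lift₂
    (fun a b => Quot.mk _ ⟨S₂.mul a.1 b.1, hS₂.mul_ne_zero _ _ a.2 b.2⟩)
    (fun a b b' hbb' => by
      obtain ⟨z, hz, h⟩ := hbb'
      refine Quot.sound ⟨z, hz, ?_⟩
      show S₂.mul (S₂.mul a.1 b.1) (g z) = S₂.mul (f z) (S₂.mul a.1 b'.1)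
      rw [hS₂.mul_assoc, h, ← hS₂.mul_assoc, hS₂.mul_comm a.1 (f z), hS₂.mul_assoc])
    (fun a a' b haa' => by
      obtain ⟨z, hz, h⟩ := haa'
      refine Quot.sound ⟨z, hz, ?_⟩
      show S₂.mul (S₂.mul a.1 b.1) (g z) = S₂.mul (f z) (S₂.mul a'.1 b.1)
      rw [hS₂.mul_assoc, hS₂.mul_comm b.1 (g z), ← hS₂.mul_assoc, h, hS₂.mul_assoc])

/-- Negation on the quotient `P₂^×/∼`. -/
def qneg (hS₂ : S₂.IsPasture) :
    Quot (coeqRel S₁ S₂ f g) → Quot (coeqRel S₁ S₂ f g) :=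
  Quot.lift
    (fun a => Quot.mk _ ⟨S₂.neg a.1,
      fun h => a.2 (by rw [← hS₂.neg_neg a.1, h, hS₂.neg_zero])⟩)
    (fun a a' haa' => by
      obtain ⟨z, hz, h⟩ := haa'
      refine Quot.sound ⟨z, hz, ?_⟩
      show S₂.mul (S₂.neg a.1) (g z) = S₂.mul (f z) (S₂.neg a'.1)
      rw [hS₂.mul_comm, mul_neg' S₂ hS₂, hS₂.mul_comm (g z), h, mul_neg' S₂ hS₂])

/-- The pasture structure on the coequalizer. -/
noncomputable def SQdef (hS₂ : S₂.IsPasture) : PastureStr (CoeqCarrier S₁ S₂ f g) where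
  mul := fun u v =>
    match u, v with
    | none, _ => none
    | some _, none => none
    | some a, some b => some (qmul S₁ S₂ f g hS₂ a b)
  zero := none
  one := coeqMap S₁ S₂ f g S₂.one
  neg := Option.map (qneg S₁ S₂ f g hS₂)
  null := fun u v w => ∃ a b c : P₂, S₂.null a b c ∧
      coeqMap S₁ S₂ f g a = u ∧ coeqMap S₁ S₂ f g b = v ∧ coeqMap S₁ S₂ f g c = w

lemma qzero : coeqMap S₁ S₂ f g S₂.zero = none := by
  simp [coeqMap]; rfl

lemma qnone {x : P₂} : coeqMap S₁ S₂ f g x = none ↔ x = S₂.zero := by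
  by_cases h : x = S₂.zero <;> simp [coeqMap, h] <;> rfl

lemma qsurj (u : CoeqCarrier S₁ S₂ f g) : ∃ x : P₂, coeqMap S₁ S₂ f g x = u := by
  cases u with
  | none => exact ⟨S₂.zero, qzero S₁ S₂ f g⟩
  | some t =>
    induction t using Quot.ind with
    | _ a => exact ⟨a.1, by simp [coeqMap, a.2]; rfl⟩

lemma qmk {x : P₂} (h : x ≠ S₂.zero) :
    coeqMap S₁ S₂ f g x = some (Quot.mk (coeqRel S₁ S₂ f g) ⟨x, h⟩) := by
  simp [coeqMap, h]; rfl

lemma mulspec (hS₂ : S₂.IsPasture) (x y : P₂) :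
    (SQdef S₁ S₂ f g hS₂).mul (coeqMap S₁ S₂ f g x) (coeqMap S₁ S₂ f g y) =
      coeqMap S₁ S₂ f g (S₂.mul x y) := by
  by_cases hx : x = S₂.zero
  · subst hx
    rw [qzero, hS₂.zero_mul, qzero]
    rfl
  · by_cases hy : y = S₂.zero
    · subst hy
      rw [qzero, mul_zero' S₂ hS₂, qzero, qmk S₁ S₂ f g hx]
      rfl
    · rw [qmk S₁ S₂ f g hx, qmk S₁ S₂ f g hy,
        qmk S₁ S₂ f g (hS₂.mul_ne_zero _ _ hx hy)]
      rfl

lemma negspec (hS₂ : S₂.IsPasture) (x : P₂) :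
    (SQdef S₁ S₂ f g hS₂).neg (coeqMap S₁ S₂ f g x) =
      coeqMap S₁ S₂ f g (S₂.neg x) := by
  by_cases hx : x = S₂.zero
  · subst hx
    rw [qzero, hS₂.neg_zero, qzero]
    rfl
  · have hnx : S₂.neg x ≠ S₂.zero := fun h => hx (by rw [← hS₂.neg_neg x, h, hS₂.neg_zero])
    rw [qmk S₁ S₂ f g hx, qmk S₁ S₂ f g hnx]
    rfl

end Aux

/-- **The coequalizer of two morphisms of pastures is a pasture**, and the
quotient map `q : P₂ → Q` is a morphism of pastures. -/
theorem coequalizer_is_pasture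
    (S₁ : PastureStr P₁) (S₂ : PastureStr P₂)
    (hS₁ : S₁.IsPasture) (hS₂ : S₂.IsPasture)
    (f g : P₁ → P₂) (hf : S₁.IsHom S₂ f) (hg : S₁.IsHom S₂ g) :
    ∃ SQ : PastureStr (CoeqCarrier S₁ S₂ f g),
      CoeqSpec S₁ S₂ f g SQ ∧ SQ.IsPasture ∧
      PastureStr.IsHom S₂ SQ (coeqMap S₁ S₂ f g) := by
  refine ⟨SQdef S₁ S₂ f g hS₂, ⟨rfl, rfl, mulspec S₁ S₂ f g hS₂, negspec S₁ S₂ f g hS₂,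
    fun _ _ _ => Iff.rfl⟩, ?_, ?_⟩
  · constructor
    · intro u v
      obtain ⟨x, rfl⟩ := qsurj S₁ S₂ f g u
      obtain ⟨y, rfl⟩ := qsurj S₁ S₂ f g v
      rw [mulspec S₁ S₂ f g hS₂, mulspec S₁ S₂ f g hS₂, hS₂.mul_comm]
    · intro u v w
      obtain ⟨x, rfl⟩ := qsurj S₁ S₂ f g u
      obtain ⟨y, rfl⟩ := qsurj S₁ S₂ f g v
      obtain ⟨z, rfl⟩ := qsurj S₁ S₂ f g w
      rw [mulspec S₁ S₂ f g hS₂, mulspec S₁ S₂ f g hS₂, mulspec S₁ S₂ f g hS₂,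
        mulspec S₁ S₂ f g hS₂, hS₂.mul_assoc]
    · intro u
      obtain ⟨x, rfl⟩ := qsurj S₁ S₂ f g u
      show (SQdef S₁ S₂ f g hS₂).mul (coeqMap S₁ S₂ f g S₂.one) (coeqMap S₁ S₂ f g x) = coeqMap S₁ S₂ f g x
      rw [mulspec S₁ S₂ f g hS₂, hS₂.one_mul]
    · intro u
      obtain ⟨x, rfl⟩ := qsurj S₁ S₂ f g u
      show (SQdef S₁ S₂ f g hS₂).mul none (coeqMap S₁ S₂ f g x) = none
      cases coeqMap S₁ S₂ f g x <;> rfl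
    · show coeqMap S₁ S₂ f g S₂.one ≠ none
      exact fun h => hS₂.one_ne_zero ((qnone S₁ S₂ f g).1 h)
    · intro u v hu hv
      obtain ⟨x, rfl⟩ := qsurj S₁ S₂ f g u
      obtain ⟨y, rfl⟩ := qsurj S₁ S₂ f g v
      rw [mulspec S₁ S₂ f g hS₂]
      show ¬ coeqMap S₁ S₂ f g (S₂.mul x y) = none
      rw [qnone S₁ S₂ f g]
      exact hS₂.mul_ne_zero x y (fun h => hu (by rw [h, qzero S₁ S₂ f g]; rfl))
        (fun h => hv (by rw [h, qzero S₁ S₂ f g]; rfl))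
    · intro u hu
      obtain ⟨x, rfl⟩ := qsurj S₁ S₂ f g u
      have hx : x ≠ S₂.zero := fun h => hu (by rw [h, qzero S₁ S₂ f g]; rfl)
      obtain ⟨b, hb⟩ := hS₂.exists_inv x hx
      exact ⟨coeqMap S₁ S₂ f g b, by rw [mulspec S₁ S₂ f g hS₂, hb]; rfl⟩
    · intro u
      obtain ⟨x, rfl⟩ := qsurj S₁ S₂ f g u
      rw [negspec S₁ S₂ f g hS₂, negspec S₁ S₂ f g hS₂, hS₂.neg_neg]
    · rfl
    · rintro u v w ⟨a, b, c, h, ha, hb, hc⟩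
      exact ⟨b, a, c, hS₂.null_swap_left _ _ _ h, hb, ha, hc⟩
    · rintro u v w ⟨a, b, c, h, ha, hb, hc⟩
      exact ⟨a, c, b, hS₂.null_swap_right _ _ _ h, ha, hc, hb⟩
    · rintro d u v w ⟨a, b, c, h, ha, hb, hc⟩
      obtain ⟨x, rfl⟩ := qsurj S₁ S₂ f g d
      rw [← ha, ← hb, ← hc, mulspec S₁ S₂ f g hS₂, mulspec S₁ S₂ f g hS₂,
        mulspec S₁ S₂ f g hS₂]
      exact ⟨S₂.mul x a, S₂.mul x b, S₂.mul x c, hS₂.null_mul x a b c h, rfl, rfl, rfl⟩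
    · intro u v
      constructor
      · rintro ⟨a, b, c, h, ha, hb, hc⟩
        have hc0 : c = S₂.zero := (qnone S₁ S₂ f g).1 hc
        subst hc0
        have hab : a = S₂.neg b := (hS₂.null_zero a b).1 h
        rw [← ha, ← hb, negspec S₁ S₂ f g hS₂, hab]
      · intro h
        obtain ⟨y, rfl⟩ := qsurj S₁ S₂ f g v
        refine ⟨S₂.neg y, y, S₂.zero, (hS₂.null_zero _ _).2 rfl, ?_, rfl, qzero S₁ S₂ f g⟩
        rw [h, negspec S₁ S₂ f g hS₂]
  · exact ⟨fun a b => (mulspec S₁ S₂ f g hS₂ a b).symm, qzero S₁ S₂ f g, rfl,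
      fun a => (negspec S₁ S₂ f g hS₂ a).symm,
      fun a b c h => ⟨a, b, c, h, rfl, rfl, rfl⟩⟩
end

section
/- Given an index set I and a family of pastures (P_i)_{i ∈ I}, the coproduct ⊗_{i∈I} P_i, whose nonzero elements are sign-equivalence classes of restricted tuples in ⊕_{i∈I} P_i^×, is a pasture: multiplication of classes is well-defined and makes the nonzero classes an abelian group, the involution (negating one coordinate) is well-defined, and the nullset satisfies the three axioms of a nullset; moreover, for each j ∈ I the map i_j : P_j → ⊗_{i∈I} P_i sending 0 to 0 and x ∈ P_j^× to the class of the tuple equal to x in coordinate j and 1 elsewhere is a morphism of pastures. -/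
universe u v w

/-- A restricted tuple in `⊕_{i ∈ I} (P i)^×`: a tuple of nonzero elements
with all but finitely many coordinates equal to `1`. -/
def RTuple {I : Type v} (P : I → Type u) (S : ∀ i, PastureStr (P i)) :
    Type (max u v) :=
  {x : ∀ i, P i // (∀ i, x i ≠ (S i).zero) ∧ {i | x i ≠ (S i).one}.Finite}

/-- The sign equivalence on restricted tuples: `x ∼ y` iff there is an even
number of indices `i₁, …, i₂ₙ` at which `x` equals `-y`, while `x = y` at all
other indices. -/
def signRel {I : Type v} (P : I → Type u) (S : ∀ i, PastureStr (P i)) :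
    RTuple P S → RTuple P S → Prop := fun x y =>
  ∃ E : Finset I, Even E.card ∧ (∀ i ∈ E, x.1 i = (S i).neg (y.1 i)) ∧
    ∀ i ∉ E, x.1 i = y.1 i

/-- The underlying set of the coproduct `⊗_{i ∈ I} P i`:
`{0} ∪ (⊕_{i ∈ I} (P i)^× / ∼)`, with `none` playing the role of `0`. -/
def CoprodCarrier {I : Type v} (P : I → Type u) (S : ∀ i, PastureStr (P i)) :
    Type (max u v) :=
  Option (Quot (signRel P S))

/-- A pasture structure `SQ` on `{0} ∪ (⊕_{i ∈ I} (P i)^× / ∼)` realizes the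
coproduct `⊗_{i ∈ I} P i` if: its zero is `0`, its one is the class of the
all-ones tuple, its multiplication is componentwise on classes with `0`
absorbing (in particular multiplication of classes is well-defined), its
involution negates one coordinate (in particular this is well-defined), and
its nullset is: for nonzero classes, `[x] + [y] + [z] = 0` iff there are
representatives `x' ∼ x`, `y' ∼ y`, `z' ∼ z` and an index `j` with
`x'_j + y'_j + z'_j = 0` in `P j` and `x'_i = y'_i = z'_i` for all `i ≠ j`;
and `[x] + [y] + 0 = 0` iff `[x] = -[y]`. -/
def CoprodSpec {I : Type v} (P : I → Type u) (S : ∀ i, PastureStr (P i))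
    (SQ : PastureStr (CoprodCarrier P S)) : Prop :=
  SQ.zero = none ∧
  (∀ t : RTuple P S, (∀ i, t.1 i = (S i).one) →
      SQ.one = some (Quot.mk (signRel P S) t)) ∧
  (∀ x y t : RTuple P S, (∀ i, t.1 i = (S i).mul (x.1 i) (y.1 i)) →
      SQ.mul (some (Quot.mk (signRel P S) x)) (some (Quot.mk (signRel P S) y)) =
        some (Quot.mk (signRel P S) t)) ∧
  (∀ u, SQ.mul none u = none) ∧
  (∀ u, SQ.mul u none = none) ∧
  SQ.neg none = none ∧
  (∀ (x t : RTuple P S) (j : I), t.1 j = (S j).neg (x.1 j) →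
      (∀ i, i ≠ j → t.1 i = x.1 i) →
      SQ.neg (some (Quot.mk (signRel P S) x)) = some (Quot.mk (signRel P S) t)) ∧
  (∀ x y z : Quot (signRel P S),
      SQ.null (some x) (some y) (some z) ↔
        ∃ (x' y' z' : RTuple P S) (j : I),
          Quot.mk (signRel P S) x' = x ∧ Quot.mk (signRel P S) y' = y ∧
          Quot.mk (signRel P S) z' = z ∧
          (S j).null (x'.1 j) (y'.1 j) (z'.1 j) ∧
          ∀ i, i ≠ j → x'.1 i = y'.1 i ∧ y'.1 i = z'.1 i) ∧
  (∀ u v : CoprodCarrier P S, SQ.null u v none ↔ u = SQ.neg v)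

/-- Maps `inc j : P j → ⊗_{i ∈ I} P i` realize the canonical inclusions if
`inc j 0 = 0` and, for `x ∈ (P j)^×`, `inc j x` is the class of the tuple
equal to `x` in coordinate `j` and to `1` elsewhere. -/
def CoprodIncSpec {I : Type v} (P : I → Type u) (S : ∀ i, PastureStr (P i))
    (inc : ∀ j, P j → CoprodCarrier P S) : Prop :=
  (∀ j, inc j ((S j).zero) = none) ∧
  ∀ (j : I) (x : P j), x ≠ (S j).zero →
    ∀ t : RTuple P S, t.1 j = x → (∀ i, i ≠ j → t.1 i = (S i).one) →
      inc j x = some (Quot.mk (signRel P S) t)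

namespace CoprodAux

variable {I : Type v} {P : I → Type u} {S : ∀ i, PastureStr (P i)}

section
variable (hp : ∀ i, (S i).IsPasture)
include hp
set_option linter.unusedSectionVars false

theorem mul_zero' (i : I) (a : P i) : (S i).mul a (S i).zero = (S i).zero := by
  rw [(hp i).mul_comm]; exact (hp i).zero_mul a

theorem mul_one' (i : I) (a : P i) : (S i).mul a (S i).one = a := by
  rw [(hp i).mul_comm]; exact (hp i).one_mul a

theorem neg_mul' (i : I) (d b : P i) :
    (S i).mul d ((S i).neg b) = (S i).neg ((S i).mul d b) := by
  have h0 : (S i).null ((S i).neg b) b (S i).zero := ((hp i).null_zero _ _).2 rfl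
  have h1 := (hp i).null_mul d _ _ _ h0
  rw [mul_zero' hp] at h1
  exact ((hp i).null_zero _ _).1 h1

theorem neg_ne_zero' (i : I) (a : P i) (ha : a ≠ (S i).zero) :
    (S i).neg a ≠ (S i).zero := by
  intro hna
  apply ha
  rw [← (hp i).neg_neg a, hna, (hp i).neg_zero]

theorem rt_ext {x y : RTuple P S} (hx : ∀ i, x.1 i = y.1 i) : x = y :=
  Subtype.ext (funext hx)

/-- Componentwise product of restricted tuples. -/
def tMul (x y : RTuple P S) : RTuple P S :=
  ⟨fun i => (S i).mul (x.1 i) (y.1 i),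
   fun i => (hp i).mul_ne_zero _ _ (x.2.1 i) (y.2.1 i),
   (x.2.2.union y.2.2).subset (by
     intro i hi
     simp only [Set.mem_setOf_eq, Set.mem_union] at *
     by_contra hc
     push_neg at hc
     exact hi (by rw [hc.1, hc.2, (hp i).one_mul]))⟩

@[simp] theorem tMul_apply (x y : RTuple P S) (i : I) :
    (tMul hp x y).1 i = (S i).mul (x.1 i) (y.1 i) := rfl

/-- The all-ones tuple. -/
def tOnes : RTuple P S :=
  ⟨fun i => (S i).one, fun i => (hp i).one_ne_zero,
   Set.finite_empty.subset (fun i hi => (hi rfl).elim)⟩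

@[simp] theorem tOnes_apply (i : I) : (tOnes hp).1 i = (S i).one := rfl

/-- Negation of a restricted tuple at coordinate `j`. -/
noncomputable def tNegAt (j : I) (x : RTuple P S) : RTuple P S :=
  letI := Classical.decEq I
  ⟨Function.update x.1 j ((S j).neg (x.1 j)),
   fun i => by
     rcases eq_or_ne i j with rfl | hij
     · rw [Function.update_self]; exact neg_ne_zero' hp _ _ (x.2.1 i)
     · rw [Function.update_of_ne hij]; exact x.2.1 i,
   (x.2.2.insert j).subset (by
     intro i hi
     rcases eq_or_ne i j with rfl | hij
     · exact Set.mem_insert _ _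
     · refine Set.mem_insert_of_mem _ ?_
       rwa [Set.mem_setOf_eq, Function.update_of_ne hij] at hi)⟩

theorem tNegAt_self (j : I) (x : RTuple P S) :
    (tNegAt hp j x).1 j = (S j).neg (x.1 j) := by
  letI := Classical.decEq I
  exact Function.update_self _ _ _

theorem tNegAt_other (j : I) (x : RTuple P S) (i : I) (hij : i ≠ j) :
    (tNegAt hp j x).1 i = x.1 i := by
  letI := Classical.decEq I
  exact Function.update_of_ne hij _ _

/-- The tuple with `a` in coordinate `j` and `1` elsewhere. -/
noncomputable def tSingle (j : I) (a : P j) (ha : a ≠ (S j).zero) : RTuple P S :=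
  letI := Classical.decEq I
  ⟨Function.update (fun i => (S i).one) j a,
   fun i => by
     rcases eq_or_ne i j with rfl | hij
     · rwa [Function.update_self]
     · rw [Function.update_of_ne hij]; exact (hp i).one_ne_zero,
   (Set.finite_singleton j).subset (by
     intro i hi
     rcases eq_or_ne i j with rfl | hij
     · exact Set.mem_singleton _
     · exact absurd (Function.update_of_ne hij _ _) hi)⟩

theorem tSingle_self (j : I) (a : P j) (ha : a ≠ (S j).zero) :
    (tSingle hp j a ha).1 j = a := by
  letI := Classical.decEq I
  show Function.update (fun i => (S i).one) j a j = a
  exact Function.update_self _ _ _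

theorem tSingle_other (j : I) (a : P j) (ha : a ≠ (S j).zero) (i : I) (hij : i ≠ j) :
    (tSingle hp j a ha).1 i = (S i).one := by
  letI := Classical.decEq I
  show Function.update (fun i => (S i).one) j a i = (S i).one
  exact Function.update_of_ne hij _ _

/-- Componentwise inverse of a restricted tuple. -/
noncomputable def tInv (x : RTuple P S) : RTuple P S :=
  ⟨fun i => Classical.choose ((hp i).exists_inv _ (x.2.1 i)),
   fun i hb => by
     have hs := Classical.choose_spec ((hp i).exists_inv _ (x.2.1 i))
     rw [show Classical.choose ((hp i).exists_inv _ (x.2.1 i)) = (S i).zero from hb,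
       mul_zero' hp] at hs
     exact (hp i).one_ne_zero hs.symm,
   x.2.2.subset (by
     intro i hi
     simp only [Set.mem_setOf_eq] at hi ⊢
     intro hx1
     apply hi
     have hs := Classical.choose_spec ((hp i).exists_inv _ (x.2.1 i))
     generalize hc : Classical.choose ((hp i).exists_inv (x.1 i) (x.2.1 i)) = c at hs ⊢
     rw [hx1, (hp i).one_mul] at hs
     exact hs)⟩

theorem tInv_spec (x : RTuple P S) (i : I) :
    (S i).mul (x.1 i) ((tInv hp x).1 i) = (S i).one :=
  Classical.choose_spec ((hp i).exists_inv _ (x.2.1 i))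


theorem srel_refl (x : RTuple P S) : signRel P S x x :=
  ⟨∅, by simp, fun i hi => absurd hi (Finset.notMem_empty i), fun _ _ => rfl⟩

theorem neg_mul_left' (i : I) (a b : P i) :
    (S i).mul ((S i).neg a) b = (S i).neg ((S i).mul a b) := by
  rw [(hp i).mul_comm ((S i).neg a) b, neg_mul' hp, (hp i).mul_comm b a]

theorem srel_mul_right {x x' : RTuple P S} (y : RTuple P S) (hxx : signRel P S x x') :
    signRel P S (tMul hp x y) (tMul hp x' y) := by
  obtain ⟨E, hE, hneg, heq⟩ := hxx
  refine ⟨E, hE, fun i hi => ?_, fun i hi => ?_⟩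
  · show (S i).mul (x.1 i) (y.1 i) = (S i).neg ((S i).mul (x'.1 i) (y.1 i))
    rw [hneg i hi]
    exact neg_mul_left' hp i _ _
  · show (S i).mul (x.1 i) (y.1 i) = (S i).mul (x'.1 i) (y.1 i)
    rw [heq i hi]

theorem srel_mul_left {y y' : RTuple P S} (x : RTuple P S) (hyy : signRel P S y y') :
    signRel P S (tMul hp x y) (tMul hp x y') := by
  obtain ⟨E, hE, hneg, heq⟩ := hyy
  refine ⟨E, hE, fun i hi => ?_, fun i hi => ?_⟩
  · show (S i).mul (x.1 i) (y.1 i) = (S i).neg ((S i).mul (x.1 i) (y'.1 i))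
    rw [hneg i hi]
    exact neg_mul' hp i _ _
  · show (S i).mul (x.1 i) (y.1 i) = (S i).mul (x.1 i) (y'.1 i)
    rw [heq i hi]

/-- Multiplication on sign-equivalence classes. -/
noncomputable def mulQ : Quot (signRel P S) → Quot (signRel P S) → Quot (signRel P S) := by
  refine Quot.lift
    (fun x => Quot.lift (fun y => Quot.mk (signRel P S) (tMul hp x y))
      (fun _ _ hy => Quot.sound (srel_mul_left hp x hy))) ?_
  intro x x' hx
  funext q
  induction q using Quot.ind with
  | _ y => exact Quot.sound (srel_mul_right hp y hx)

theorem mulQ_mk (x y : RTuple P S) :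
    mulQ hp (Quot.mk (signRel P S) x) (Quot.mk (signRel P S) y) =
      Quot.mk (signRel P S) (tMul hp x y) := rfl

theorem srel_negAt {x y : RTuple P S} (j : I) (hxy : signRel P S x y) :
    signRel P S (tNegAt hp j x) (tNegAt hp j y) := by
  obtain ⟨E, hE, hneg, heq⟩ := hxy
  refine ⟨E, hE, fun i hi => ?_, fun i hi => ?_⟩
  · rcases eq_or_ne i j with rfl | hij
    · rw [tNegAt_self hp, tNegAt_self hp, hneg i hi]
    · rw [tNegAt_other hp _ _ _ hij, tNegAt_other hp _ _ _ hij]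
      exact hneg i hi
  · rcases eq_or_ne i j with rfl | hij
    · rw [tNegAt_self hp, tNegAt_self hp, heq i hi]
    · rw [tNegAt_other hp _ _ _ hij, tNegAt_other hp _ _ _ hij]
      exact heq i hi

open Classical in
noncomputable def negQ : Quot (signRel P S) → Quot (signRel P S) := fun q =>
  if hI : Nonempty I then
    Quot.lift (fun x => Quot.mk (signRel P S) (tNegAt hp hI.some x))
      (fun _ _ hxy => Quot.sound (srel_negAt hp _ hxy)) q
  else q

theorem mk_tNegAt_eq (j j' : I) (x : RTuple P S) :
    Quot.mk (signRel P S) (tNegAt hp j x) = Quot.mk (signRel P S) (tNegAt hp j' x) := by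
  classical
  rcases eq_or_ne j j' with rfl | hjj
  · rfl
  apply Quot.sound
  refine ⟨{j, j'}, by rw [Finset.card_pair hjj]; exact ⟨1, rfl⟩, fun i hi => ?_, fun i hi => ?_⟩
  · rcases Finset.mem_insert.mp hi with rfl | hi'
    · rw [tNegAt_self hp, tNegAt_other hp j' x i hjj]
    · rw [Finset.mem_singleton] at hi'
      subst hi'
      rw [tNegAt_other hp j x i (Ne.symm hjj), tNegAt_self hp, (hp i).neg_neg]
  · have h1 : i ≠ j := fun e => hi (by rw [e]; exact Finset.mem_insert_self _ _)
    have h2 : i ≠ j' := fun e =>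
      hi (by rw [e]; exact Finset.mem_insert_of_mem (Finset.mem_singleton_self _))
    rw [tNegAt_other hp _ _ _ h1, tNegAt_other hp _ _ _ h2]

theorem negQ_mk (j : I) (x : RTuple P S) :
    negQ hp (Quot.mk (signRel P S) x) = Quot.mk (signRel P S) (tNegAt hp j x) := by
  have hI : Nonempty I := ⟨j⟩
  unfold negQ
  rw [dif_pos hI]
  exact mk_tNegAt_eq hp _ j x

theorem negQ_negQ (q : Quot (signRel P S)) : negQ hp (negQ hp q) = q := by
  by_cases hI : Nonempty I
  · obtain ⟨j⟩ := hI
    induction q using Quot.ind with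
    | _ x =>
      rw [negQ_mk hp j, negQ_mk hp j]
      congr 1
      refine rt_ext hp fun i => ?_
      rcases eq_or_ne i j with rfl | hij
      · rw [tNegAt_self hp, tNegAt_self hp, (hp i).neg_neg]
      · rw [tNegAt_other hp _ _ _ hij, tNegAt_other hp _ _ _ hij]
  · simp only [negQ, dif_neg hI]

theorem mulQ_negQ (a b : Quot (signRel P S)) :
    mulQ hp a (negQ hp b) = negQ hp (mulQ hp a b) := by
  by_cases hI : Nonempty I
  · obtain ⟨j⟩ := hI
    induction a using Quot.ind with
    | _ x =>
      induction b using Quot.ind with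
      | _ y =>
        show mulQ hp (Quot.mk _ x) (negQ hp (Quot.mk _ y)) =
          negQ hp (Quot.mk _ (tMul hp x y))
        rw [negQ_mk hp j, negQ_mk hp j, mulQ_mk]
        congr 1
        refine rt_ext hp fun i => ?_
        rcases eq_or_ne i j with rfl | hij
        · rw [tMul_apply, tNegAt_self hp i y, tNegAt_self hp i (tMul hp x y),
            tMul_apply, neg_mul' hp]
        · rw [tMul_apply, tNegAt_other hp j y i hij,
            tNegAt_other hp j (tMul hp x y) i hij, tMul_apply]
  · simp only [negQ, dif_neg hI]

end

/-- The nullset condition for three nonzero classes. -/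
def TripleNull {I : Type v} {P : I → Type u} {S : ∀ i, PastureStr (P i)}
    (x y z : Quot (signRel P S)) : Prop :=
  ∃ (x' y' z' : RTuple P S) (j : I),
    Quot.mk (signRel P S) x' = x ∧ Quot.mk (signRel P S) y' = y ∧
    Quot.mk (signRel P S) z' = z ∧
    (S j).null (x'.1 j) (y'.1 j) (z'.1 j) ∧
    ∀ i, i ≠ j → x'.1 i = y'.1 i ∧ y'.1 i = z'.1 i

section
variable (hp : ∀ i, (S i).IsPasture)

/-- The coproduct pasture structure. -/
noncomputable def SQ' : PastureStr (CoprodCarrier P S) where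
  mul u v :=
    match u, v with
    | some a, some b => some (mulQ hp a b)
    | _, _ => none
  zero := none
  one := some (Quot.mk (signRel P S) (tOnes hp))
  neg u :=
    match u with
    | some a => some (negQ hp a)
    | none => none
  null u v w :=
    match u, v, w with
    | some x, some y, some z => TripleNull x y z
    | some x, some y, none => x = negQ hp y
    | some x, none, some z => x = negQ hp z
    | none, some y, some z => y = negQ hp z
    | none, none, none => True
    | _, _, _ => False

theorem SQ'_mul_ss (a b : Quot (signRel P S)) :
    (SQ' hp).mul (some a) (some b) = some (mulQ hp a b) := rfl

theorem SQ'_mul_nl (u : CoprodCarrier P S) : (SQ' hp).mul none u = none := by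
  cases u <;> rfl

theorem SQ'_mul_nr (u : CoprodCarrier P S) : (SQ' hp).mul u none = none := by
  cases u <;> rfl

theorem SQ'_neg_s (a : Quot (signRel P S)) :
    (SQ' hp).neg (some a) = some (negQ hp a) := rfl

theorem SQ'_neg_n : (SQ' hp).neg none = none := rfl

theorem SQ'_null_sss (x y z : Quot (signRel P S)) :
    (SQ' hp).null (some x) (some y) (some z) ↔ TripleNull x y z := Iff.rfl

theorem SQ'_null_ssn (x y : Quot (signRel P S)) :
    (SQ' hp).null (some x) (some y) none ↔ x = negQ hp y := Iff.rfl

theorem SQ'_null_zero (u v : CoprodCarrier P S) :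
    (SQ' hp).null u v none ↔ u = (SQ' hp).neg v := by
  rcases u with _ | x <;> rcases v with _ | y
  · exact ⟨fun _ => rfl, fun _ => trivial⟩
  · exact ⟨fun hf => False.elim hf, fun e => (by cases e)⟩
  · exact ⟨fun hf => False.elim hf, fun e => (by cases e)⟩
  · rw [SQ'_neg_s hp]
    exact (SQ'_null_ssn hp x y).trans Option.some_inj.symm

open Classical in
noncomputable def inc' (j : I) (a : P j) : CoprodCarrier P S :=
  if ha : a = (S j).zero then none
  else some (Quot.mk (signRel P S) (tSingle hp j a ha))

theorem inc'_zero (j : I) : inc' hp j ((S j).zero) = none := dif_pos rfl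

theorem inc'_ne (j : I) (a : P j) (ha : a ≠ (S j).zero) :
    inc' hp j a = some (Quot.mk (signRel P S) (tSingle hp j a ha)) := dif_neg ha

end
end CoprodAux

open CoprodAux in
/-- **The coproduct of an arbitrary family of pastures is a pasture**: there
is a pasture structure on `{0} ∪ (⊕_{i ∈ I} (P i)^× / ∼)` with the prescribed
zero, one, (well-defined) multiplication and involution of sign-equivalence
classes, and nullset; moreover the canonical maps `inc j : P j → ⊗_{i ∈ I} P i`
are morphisms of pastures. -/
theorem coproduct_is_pasture {I : Type v} (P : I → Type u)
    (S : ∀ i, PastureStr (P i)) (h : ∀ i, (S i).IsPasture) :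
    ∃ SQ : PastureStr (CoprodCarrier P S),
      CoprodSpec P S SQ ∧ SQ.IsPasture ∧
      ∃ inc : ∀ j, P j → CoprodCarrier P S,
        CoprodIncSpec P S inc ∧ ∀ j, PastureStr.IsHom (S j) SQ (inc j) := by
  refine ⟨SQ' h, ⟨rfl, ?_, ?_, SQ'_mul_nl h, SQ'_mul_nr h, rfl, ?_, fun x y z => Iff.rfl,
      SQ'_null_zero h⟩, ?_, inc' h, ⟨fun j => inc'_zero h j, ?_⟩, ?_⟩
  · -- one
    intro t ht
    exact congrArg some (congrArg (Quot.mk _) (rt_ext h fun i => (ht i).symm))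
  · -- mul
    intro x y t ht
    exact congrArg some (congrArg (Quot.mk _) (rt_ext h fun i => (ht i).symm))
  · -- neg
    intro x t j htj hto
    have ht : t = tNegAt h j x := by
      refine rt_ext h fun i => ?_
      rcases eq_or_ne i j with rfl | hij
      · rw [tNegAt_self h]; exact htj
      · rw [tNegAt_other h _ _ _ hij]; exact hto i hij
    rw [SQ'_neg_s h, negQ_mk h j, ht]
  · -- IsPasture
    refine ⟨?_, ?_, ?_, ?_, ?_, ?_, ?_, ?_, rfl, ?_, ?_, ?_, SQ'_null_zero h⟩
    · -- mul_comm
      rintro (_ | a) (_ | b)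
      · rfl
      · rfl
      · rfl
      · induction a using Quot.ind with
        | _ x =>
          induction b using Quot.ind with
          | _ y =>
            show some (Quot.mk _ (tMul h x y)) = some (Quot.mk _ (tMul h y x))
            exact congrArg some (congrArg (Quot.mk _)
              (rt_ext h fun i => (h i).mul_comm _ _))
    · -- mul_assoc
      rintro (_ | a) (_ | b) (_ | c) <;> try rfl
      induction a using Quot.ind with
      | _ x =>
        induction b using Quot.ind with
        | _ y =>
          induction c using Quot.ind with
          | _ z =>
            show some (Quot.mk _ (tMul h (tMul h x y) z)) =
              some (Quot.mk _ (tMul h x (tMul h y z)))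
            exact congrArg some (congrArg (Quot.mk _)
              (rt_ext h fun i => (h i).mul_assoc _ _ _))
    · -- one_mul
      rintro (_ | a)
      · rfl
      · induction a using Quot.ind with
        | _ x =>
          show some (Quot.mk _ (tMul h (tOnes h) x)) = some (Quot.mk _ x)
          exact congrArg some (congrArg (Quot.mk _)
            (rt_ext h fun i => (h i).one_mul _))
    · -- zero_mul
      rintro (_ | a) <;> rfl
    · -- one_ne_zero
      exact fun hc => (by cases hc)
    · -- mul_ne_zero
      rintro (_ | a) (_ | b) ha hb
      · exact absurd rfl ha
      · exact absurd rfl ha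
      · exact absurd rfl hb
      · exact fun hc => (by cases hc)
    · -- exists_inv
      rintro (_ | a) ha
      · exact absurd rfl ha
      · induction a using Quot.ind with
        | _ x =>
          refine ⟨some (Quot.mk _ (tInv h x)), ?_⟩
          show some (Quot.mk _ (tMul h x (tInv h x))) = some (Quot.mk _ (tOnes h))
          exact congrArg some (congrArg (Quot.mk _)
            (rt_ext h fun i => tInv_spec h x i))
    · -- neg_neg
      rintro (_ | a)
      · rfl
      · show some (negQ h (negQ h a)) = some a
        rw [negQ_negQ h]
    · -- null_swap_left
      rintro (_ | x) (_ | y) (_ | z) hn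
      · exact trivial
      · exact False.elim hn
      · exact False.elim hn
      · exact hn
      · exact False.elim hn
      · exact hn
      · show y = negQ h x
        rw [show x = negQ h y from hn]
        exact (negQ_negQ h y).symm
      · have hn' : TripleNull x y z := hn
        obtain ⟨x', y', z', j, hx, hy, hz, hnl, hre⟩ := hn'
        show TripleNull y x z
        exact ⟨y', x', z', j, hy, hx, hz, (h j).null_swap_left _ _ _ hnl,
          fun i hi => ⟨(hre i hi).1.symm, (hre i hi).1.trans (hre i hi).2⟩⟩
    · -- null_swap_right
      rintro (_ | x) (_ | y) (_ | z) hn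
      · exact trivial
      · exact False.elim hn
      · exact False.elim hn
      · show z = negQ h y
        rw [show y = negQ h z from hn]
        exact (negQ_negQ h z).symm
      · exact False.elim hn
      · exact hn
      · exact hn
      · have hn' : TripleNull x y z := hn
        obtain ⟨x', y', z', j, hx, hy, hz, hnl, hre⟩ := hn'
        show TripleNull x z y
        exact ⟨x', z', y', j, hx, hz, hy, (h j).null_swap_right _ _ _ hnl,
          fun i hi => ⟨(hre i hi).1.trans (hre i hi).2, ((hre i hi).2).symm⟩⟩
    · -- null_mul
      rintro (_ | d) (_ | x) (_ | y) (_ | z) hn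
      · exact trivial
      · exact trivial
      · exact trivial
      · exact trivial
      · exact trivial
      · exact trivial
      · exact trivial
      · exact trivial
      · exact trivial
      · exact False.elim hn
      · exact False.elim hn
      · show mulQ h d y = negQ h (mulQ h d z)
        rw [show y = negQ h z from hn, mulQ_negQ h]
      · exact False.elim hn
      · show mulQ h d x = negQ h (mulQ h d z)
        rw [show x = negQ h z from hn, mulQ_negQ h]
      · show mulQ h d x = negQ h (mulQ h d y)
        rw [show x = negQ h y from hn, mulQ_negQ h]
      · have hn' : TripleNull x y z := hn
        obtain ⟨x', y', z', j, hx, hy, hz, hnl, hre⟩ := hn'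
        subst hx; subst hy; subst hz
        induction d using Quot.ind with
        | _ u =>
          show TripleNull (mulQ h (Quot.mk _ u) (Quot.mk _ x'))
            (mulQ h (Quot.mk _ u) (Quot.mk _ y')) (mulQ h (Quot.mk _ u) (Quot.mk _ z'))
          refine ⟨tMul h u x', tMul h u y', tMul h u z', j,
            (mulQ_mk h u x').symm, (mulQ_mk h u y').symm, (mulQ_mk h u z').symm,
            (h j).null_mul (u.1 j) _ _ _ hnl,
            fun i hi => ⟨congrArg ((S i).mul (u.1 i)) (hre i hi).1,
              congrArg ((S i).mul (u.1 i)) (hre i hi).2⟩⟩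
  · -- inc spec (second part)
    intro j x hx t htj hto
    have ht : t = tSingle h j x hx := by
      refine rt_ext h fun i => ?_
      rcases eq_or_ne i j with rfl | hij
      · rw [tSingle_self h]; exact htj
      · rw [tSingle_other h j x hx i hij]; exact hto i hij
    rw [inc'_ne h j x hx, ht]
  · -- hom
    intro j
    refine ⟨?_, inc'_zero h j, ?_, ?_, ?_⟩
    · -- map_mul
      intro a b
      by_cases ha : a = (S j).zero
      · subst ha
        rw [(h j).zero_mul, inc'_zero h j, SQ'_mul_nl h]
      · by_cases hb : b = (S j).zero
        · subst hb
          rw [mul_zero' h, inc'_zero h j, SQ'_mul_nr h]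
        · have hab := (h j).mul_ne_zero a b ha hb
          rw [inc'_ne h j _ hab, inc'_ne h j _ ha, inc'_ne h j _ hb, SQ'_mul_ss, mulQ_mk]
          refine congrArg some (congrArg (Quot.mk _) (rt_ext h fun i => ?_))
          rcases eq_or_ne i j with rfl | hij
          · rw [tSingle_self h, tMul_apply, tSingle_self h, tSingle_self h]
          · rw [tSingle_other h _ _ _ i hij, tMul_apply, tSingle_other h _ _ _ i hij,
              tSingle_other h _ _ _ i hij, (h i).one_mul]
    · -- map_one
      rw [inc'_ne h j _ (h j).one_ne_zero]
      refine congrArg some (congrArg (Quot.mk _) (rt_ext h fun i => ?_))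
      rcases eq_or_ne i j with rfl | hij
      · rw [tSingle_self h]; exact (tOnes_apply h i).symm
      · rw [tSingle_other h _ _ _ i hij]; exact (tOnes_apply h i).symm
    · -- map_neg
      intro a
      by_cases ha : a = (S j).zero
      · subst ha
        rw [(h j).neg_zero, inc'_zero h j]
        exact (SQ'_neg_n h).symm
      · have hna := neg_ne_zero' h j a ha
        rw [inc'_ne h j _ hna, inc'_ne h j _ ha, SQ'_neg_s, negQ_mk h j]
        refine congrArg some (congrArg (Quot.mk _) (rt_ext h fun i => ?_))
        rcases eq_or_ne i j with rfl | hij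
        · rw [tSingle_self h, tNegAt_self h, tSingle_self h]
        · rw [tSingle_other h _ _ _ i hij, tNegAt_other h _ _ _ hij,
            tSingle_other h _ _ _ i hij]
    · -- map_null
      intro a b c hn
      by_cases ha : a = (S j).zero
      · subst ha
        by_cases hb : b = (S j).zero
        · subst hb
          by_cases hc : c = (S j).zero
          · subst hc
            rw [inc'_zero h j]
            exact trivial
          · exfalso
            apply hc
            have h1 := (h j).null_swap_left _ _ _ ((h j).null_swap_right _ _ _ hn)
            have h2 := ((h j).null_zero _ _).1 h1
            rwa [(h j).neg_zero] at h2
        · by_cases hc : c = (S j).zero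
          · subst hc
            exfalso
            apply hb
            have h1 := (h j).null_swap_left _ _ _ hn
            have h2 := ((h j).null_zero _ _).1 h1
            rwa [(h j).neg_zero] at h2
          · have hbc : b = (S j).neg c :=
              ((h j).null_zero _ _).1
                ((h j).null_swap_right _ _ _ ((h j).null_swap_left _ _ _ hn))
            rw [inc'_zero h j, inc'_ne h j _ hb, inc'_ne h j _ hc]
            show Quot.mk (signRel P S) (tSingle h j b hb) =
              negQ h (Quot.mk _ (tSingle h j c hc))
            rw [negQ_mk h j]
            refine congrArg (Quot.mk _) (rt_ext h fun i => ?_)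
            rcases eq_or_ne i j with rfl | hij
            · rw [tSingle_self h, tNegAt_self h, tSingle_self h]; exact hbc
            · rw [tSingle_other h _ _ _ i hij, tNegAt_other h _ _ _ hij,
                tSingle_other h _ _ _ i hij]
      · by_cases hb : b = (S j).zero
        · subst hb
          by_cases hc : c = (S j).zero
          · subst hc
            exfalso
            apply ha
            have h2 := ((h j).null_zero _ _).1 hn
            rwa [(h j).neg_zero] at h2
          · have hac : a = (S j).neg c :=
              ((h j).null_zero _ _).1 ((h j).null_swap_right _ _ _ hn)
            rw [inc'_zero h j, inc'_ne h j _ ha, inc'_ne h j _ hc]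
            show Quot.mk (signRel P S) (tSingle h j a ha) =
              negQ h (Quot.mk _ (tSingle h j c hc))
            rw [negQ_mk h j]
            refine congrArg (Quot.mk _) (rt_ext h fun i => ?_)
            rcases eq_or_ne i j with rfl | hij
            · rw [tSingle_self h, tNegAt_self h, tSingle_self h]; exact hac
            · rw [tSingle_other h _ _ _ i hij, tNegAt_other h _ _ _ hij,
                tSingle_other h _ _ _ i hij]
        · by_cases hc : c = (S j).zero
          · subst hc
            have hab : a = (S j).neg b := ((h j).null_zero _ _).1 hn
            rw [inc'_zero h j, inc'_ne h j _ ha, inc'_ne h j _ hb]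
            show Quot.mk (signRel P S) (tSingle h j a ha) =
              negQ h (Quot.mk _ (tSingle h j b hb))
            rw [negQ_mk h j]
            refine congrArg (Quot.mk _) (rt_ext h fun i => ?_)
            rcases eq_or_ne i j with rfl | hij
            · rw [tSingle_self h, tNegAt_self h, tSingle_self h]; exact hab
            · rw [tSingle_other h _ _ _ i hij, tNegAt_other h _ _ _ hij,
                tSingle_other h _ _ _ i hij]
          · rw [inc'_ne h j _ ha, inc'_ne h j _ hb, inc'_ne h j _ hc]
            show TripleNull (Quot.mk _ (tSingle h j a ha)) (Quot.mk _ (tSingle h j b hb))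
              (Quot.mk _ (tSingle h j c hc))
            refine ⟨tSingle h j a ha, tSingle h j b hb, tSingle h j c hc, j,
              rfl, rfl, rfl, ?_, fun i hi => ?_⟩
            · rw [tSingle_self h j a ha, tSingle_self h j b hb, tSingle_self h j c hc]
              exact hn
            · exact ⟨by rw [tSingle_other h j a ha i hi, tSingle_other h j b hb i hi],
                by rw [tSingle_other h j b hb i hi, tSingle_other h j c hc i hi]⟩
end
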